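/- For θ, δ ∈ (0,1), ∑_{n≥1} e^{−δ n^θ} ≤ e^{(θ−1)/θ} · (2/θ) · (2(1−θ)/θ)^{1/θ − 1} · δ^{−1/θ}. -/

import Mathlib

open Real Filter

-- e^{-t} t^k ≤ k^k e^{-k}
lemma aux_exp_bound {t k : ℝ} (ht : 0 < t) (hk : 0 < k) :
    Real.exp (-t) ≤ k ^ k * Real.exp (-k) * t ^ (-k) := by
  have h1 : t ^ k * Real.exp (-t) ≤ k ^ k * Real.exp (-k) := by
    rw [Real.rpow_def_of_pos ht, Real.rpow_def_of_pos hk, ← Real.exp_add, ← Real.exp_add]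
    apply Real.exp_le_exp.2
    have h2 : Real.log (t / k) ≤ t / k - 1 := Real.log_le_sub_one_of_pos (div_pos ht hk)
    rw [Real.log_div ht.ne' hk.ne'] at h2
    have h3 : k * (Real.log t - Real.log k) ≤ k * (t / k - 1) := by
      exact mul_le_mul_of_nonneg_left h2 hk.le
    have h4 : k * (t / k - 1) = t - k := by field_simp
    nlinarith
  have htk : (0:ℝ) < t ^ k := Real.rpow_pos_of_pos ht k
  have : t ^ (-k) = (t ^ k)⁻¹ := by rw [Real.rpow_neg ht.le]
  rw [this]
  rw [le_mul_inv_iff₀ htk]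
  nlinarith

theorem stmt8 (θ δ : ℝ) (hθ : 0 < θ) (hθ1 : θ < 1) (hδ : 0 < δ) (hδ1 : δ < 1) :
    ∑' n : ℕ, Real.exp (-δ * ((n : ℝ) + 1) ^ θ)
      ≤ Real.exp ((θ - 1) / θ) * (2 / θ) * (2 * (1 - θ) / θ) ^ (1 / θ - 1)
          * δ ^ (-(1 / θ)) := by
  set k : ℝ := (1 - θ) / θ with hk_def
  have hk : 0 < k := div_pos (by linarith) hθ
  set D : ℝ := Real.exp ((θ - 1) / θ) * (2 / θ) * (2 * (1 - θ) / θ) ^ (1 / θ - 1)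
      * δ ^ (-(1 / θ)) with hD_def
  set f : ℕ → ℝ := fun n => Real.exp (-(δ/2) * (n : ℝ) ^ θ) with hf_def
  set g : ℕ → ℝ := fun n => f n - f (n+1) with hg_def
  -- f is antitone
  have hmono : ∀ n : ℕ, f (n+1) ≤ f n := by
    intro n
    apply Real.exp_le_exp.2
    have h1 : (n : ℝ) ^ θ ≤ ((n+1 : ℕ) : ℝ) ^ θ := by
      apply Real.rpow_le_rpow (Nat.cast_nonneg n) (by push_cast; linarith) hθ.le
    nlinarith
  have hg_nonneg : ∀ n : ℕ, 0 ≤ g n := fun n => sub_nonneg.2 (hmono n)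
  -- f tends to 0
  have htend : Tendsto f atTop (nhds 0) := by
    have h1 : Tendsto (fun n : ℕ => (n : ℝ) ^ θ) atTop atTop :=
      (tendsto_rpow_atTop hθ).comp tendsto_natCast_atTop_atTop
    have h2 : Tendsto (fun n : ℕ => (δ/2) * (n : ℝ) ^ θ) atTop atTop :=
      h1.const_mul_atTop (by linarith)
    have h3 := Real.tendsto_exp_neg_atTop_nhds_zero.comp h2
    exact h3.congr (fun n => by simp [hf_def, neg_mul])
  -- g sums to 1
  have hf0 : f 0 = 1 := by
    simp [hf_def, Real.zero_rpow hθ.ne']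
  have hgsum : HasSum g 1 := by
    rw [hasSum_iff_tendsto_nat_of_nonneg hg_nonneg]
    have : ∀ N : ℕ, ∑ i ∈ Finset.range N, g i = f 0 - f N := fun N => Finset.sum_range_sub' f N
    simp only [this, hf0]
    simpa using (tendsto_const_nhds (x := (1:ℝ))).sub htend
  -- key pointwise bound
  have hkey : ∀ n : ℕ, Real.exp (-δ * ((n : ℝ) + 1) ^ θ) ≤ D * g n := by
    intro n
    set m : ℝ := (n : ℝ) + 1 with hm_def
    have hm1 : 1 ≤ m := by simp [hm_def]
    have hm0 : 0 < m := lt_of_lt_of_le one_pos hm1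
    set b : ℝ := (δ/2) * m ^ θ with hb_def
    have hmθ : 0 < m ^ θ := Real.rpow_pos_of_pos hm0 θ
    have hb : 0 < b := by positivity
    -- Bernoulli: n^θ ≤ m^θ - θ m^(θ-1)
    have hbern : (n : ℝ) ^ θ ≤ m ^ θ - θ * m ^ (θ - 1) := by
      have hmne : m ≠ 0 := hm0.ne'
      have hn_eq : (n : ℝ) = m * (1 + (-1/m)) := by
        field_simp
        rw [hm_def]; ring
      have h1 : (1 + (-1/m)) ^ θ ≤ 1 + θ * (-1/m) :=
        rpow_one_add_le_one_add_mul_self (by rw [neg_div, neg_le_neg_iff]; exact div_le_one_of_le₀ hm1 hm0.le) hθ.le hθ1.le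
      have h2 : (0:ℝ) ≤ 1 + (-1/m) := by
        rw [neg_div]
        have : 1/m ≤ 1 := div_le_one_of_le₀ hm1 hm0.le
        linarith
      calc (n : ℝ) ^ θ = m ^ θ * (1 + (-1/m)) ^ θ := by
            rw [hn_eq, Real.mul_rpow hm0.le h2]
        _ ≤ m ^ θ * (1 + θ * (-1/m)) := by
            exact mul_le_mul_of_nonneg_left h1 hmθ.le
        _ = m ^ θ - θ * (m ^ θ / m) := by ring
        _ = m ^ θ - θ * m ^ (θ - 1) := by
            rw [Real.rpow_sub hm0, Real.rpow_one]
    -- telescoping bound: (δθ/2) m^(θ-1) exp(-b) ≤ g n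
    have hmθ1 : 0 < m ^ (θ - 1) := Real.rpow_pos_of_pos hm0 _
    have htel : (δ * θ / 2) * m ^ (θ-1) * Real.exp (-b) ≤ g n := by
      set a : ℝ := (δ/2) * (n : ℝ) ^ θ with ha_def
      have hgn : g n = Real.exp (-a) - Real.exp (-b) := by
        simp only [hg_def, hf_def, ha_def, hb_def, hm_def]
        push_cast
        ring_nf
      have hab : b - a ≥ (δ * θ / 2) * m ^ (θ-1) := by
        simp only [ha_def, hb_def]
        nlinarith
      have hexp : Real.exp (-a) - Real.exp (-b) ≥ (b - a) * Real.exp (-b) := by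
        have h1 : 1 + (b - a) ≤ Real.exp (b - a) := by linarith [Real.add_one_le_exp (b - a)]
        have h2 : Real.exp (b-a) * Real.exp (-b) = Real.exp (-a) := by
          rw [← Real.exp_add]; ring_nf
        nlinarith [Real.exp_pos (-b)]
      rw [hgn]
      calc (δ * θ / 2) * m ^ (θ-1) * Real.exp (-b) ≤ (b - a) * Real.exp (-b) := by
            exact mul_le_mul_of_nonneg_right hab (Real.exp_pos _).le
        _ ≤ Real.exp (-a) - Real.exp (-b) := hexp
    -- main factor bound
    have hfac : Real.exp (-b) ≤ k ^ k * Real.exp (-k) * ((δ/2) ^ (-k) * m ^ (θ - 1)) := by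
      have h1 := aux_exp_bound hb hk
      have h2 : b ^ (-k) = (δ/2) ^ (-k) * m ^ (θ - 1) := by
        rw [hb_def, Real.mul_rpow (by positivity) hmθ.le, ← Real.rpow_mul hm0.le]
        congr 2
        rw [hk_def]
        field_simp; ring
      rw [h2] at h1
      exact h1
    -- combine
    have hsplit : Real.exp (-δ * m ^ θ) = Real.exp (-b) * Real.exp (-b) := by
      rw [← Real.exp_add, hb_def]; ring_nf
    have hDeq : D = k ^ k * Real.exp (-k) * (δ/2) ^ (-k) * (2 / (δ * θ)) := by
      have hθne : θ ≠ 0 := hθ.ne'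
      have e1 : (θ - 1)/θ = -k := by rw [hk_def]; field_simp; ring
      have e2 : (1:ℝ)/θ - 1 = k := by rw [hk_def]; field_simp
      have e3 : 2 * (1 - θ)/θ = 2 * k := by rw [hk_def]; ring
      have e4 : -((1:ℝ)/θ) = -k + -1 := by rw [hk_def]; field_simp; ring
      rw [hD_def, e1, e2, e3, e4, Real.rpow_add hδ, Real.rpow_neg_one,
          Real.mul_rpow (by norm_num) hk.le, Real.div_rpow hδ.le (by norm_num),
          Real.rpow_neg hδ.le, Real.rpow_neg (by norm_num : (0:ℝ) ≤ 2)]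
      have h2k : (0:ℝ) < 2 ^ k := Real.rpow_pos_of_pos two_pos k
      have hδk : (0:ℝ) < δ ^ k := Real.rpow_pos_of_pos hδ k
      field_simp
    calc Real.exp (-δ * m ^ θ) = Real.exp (-b) * Real.exp (-b) := hsplit
      _ ≤ (k ^ k * Real.exp (-k) * ((δ/2) ^ (-k) * m ^ (θ - 1))) * Real.exp (-b) := by
          exact mul_le_mul_of_nonneg_right hfac (Real.exp_pos _).le
      _ = (k ^ k * Real.exp (-k) * (δ/2) ^ (-k)) * (2/(δ*θ)) * ((δ * θ / 2) * m ^ (θ-1) * Real.exp (-b)) := by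
          field_simp
      _ ≤ (k ^ k * Real.exp (-k) * (δ/2) ^ (-k)) * (2/(δ*θ)) * g n := by
          apply mul_le_mul_of_nonneg_left htel
          positivity
      _ = D * g n := by rw [hDeq]
  -- assemble
  have hDsum : HasSum (fun n => D * g n) (D * 1) := hgsum.mul_left D
  have hsummable : Summable (fun n : ℕ => Real.exp (-δ * ((n : ℝ) + 1) ^ θ)) :=
    Summable.of_nonneg_of_le (fun n => (Real.exp_pos _).le) hkey hDsum.summable
  calc ∑' n : ℕ, Real.exp (-δ * ((n : ℝ) + 1) ^ θ) ≤ ∑' n : ℕ, D * g n :=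
        Summable.tsum_le_tsum hkey hsummable hDsum.summable
    _ = D * 1 := hDsum.tsum_eq
    _ = D := mul_one D
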